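/- arXiv:2401.16275 — 2 statements merged into one kernel-verified Lean document; each statement's English description precedes it below -/
import Mathlib

section
/- If $\psi : [0,\infty) \to [0,\infty)$ is a nontrivial sub-root function (nonnegative, nondecreasing, with $r \mapsto \psi(r)/\sqrt{r}$ nonincreasing for $r>0$, and $\psi$ is not identically zero), then the equation $\psi(r) = r$ has a unique positive solution. -/
/-- A sub-root function: nonnegative, nondecreasing on `[0,∞)`, and
`r ↦ ψ r / √r` nonincreasing on `(0,∞)`. -/
def SubRoot (ψ : ℝ → ℝ) : Prop :=
  (∀ r, 0 ≤ r → 0 ≤ ψ r) ∧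
  (∀ r s, 0 ≤ r → r ≤ s → ψ r ≤ ψ s) ∧
  (∀ r s, 0 < r → r ≤ s → ψ s / Real.sqrt s ≤ ψ r / Real.sqrt r)

/-- A nontrivial sub-root function has a unique positive fixed point. -/
theorem subroot_unique_fixed_point (ψ : ℝ → ℝ) (h : SubRoot ψ)
    (hnt : ∃ r, 0 ≤ r ∧ ψ r ≠ 0) :
    ∃! r : ℝ, 0 < r ∧ ψ r = r := by
  obtain ⟨hpos, hmono, hratio⟩ := h
  obtain ⟨r₀, hr₀, hψr₀⟩ := hnt
  have hψr₀' : 0 < ψ r₀ := (hpos r₀ hr₀).lt_of_ne (Ne.symm hψr₀)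
  -- ψ is positive on (0, ∞)
  have hpos' : ∀ r, 0 < r → 0 < ψ r := by
    intro r hr
    by_contra hcon
    push_neg at hcon
    have h0 : ψ r = 0 := le_antisymm hcon (hpos r hr.le)
    rcases le_or_gt r₀ r with h1 | h1
    · have := hmono r₀ r hr₀ h1
      rw [h0] at this; linarith
    · have hrr := hratio r r₀ hr h1.le
      rw [h0, zero_div] at hrr
      have hs : 0 < Real.sqrt r₀ := Real.sqrt_pos.mpr (hr.trans h1)
      have : ψ r₀ ≤ 0 := by
        have := (div_nonpos_iff.mp hrr)
        rcases this with ⟨_, h3⟩ | ⟨h2, _⟩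
        · linarith
        · exact h2
      linarith
  set c := ψ 1 with hcdef
  have hc0 : 0 < c := hpos' 1 one_pos
  set A := {r : ℝ | 0 < r ∧ r ≤ ψ r} with hA
  -- min 1 c² ∈ A
  set a := min 1 (c ^ 2) with hadef
  have ha0 : 0 < a := lt_min one_pos (by positivity)
  have haA : a ∈ A := by
    refine ⟨ha0, ?_⟩
    have h1 := hratio a 1 ha0 (min_le_left _ _)
    rw [Real.sqrt_one, div_one] at h1
    have hsa : 0 < Real.sqrt a := Real.sqrt_pos.mpr ha0
    have hca : Real.sqrt a ≤ c := by
      calc Real.sqrt a ≤ Real.sqrt (c ^ 2) := Real.sqrt_le_sqrt (min_le_right _ _)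
      _ = c := by rw [Real.sqrt_sq hc0.le]
    have h2 : c * Real.sqrt a ≤ ψ a := by
      rw [le_div_iff₀ hsa] at h1; exact h1
    calc a = Real.sqrt a * Real.sqrt a := (Real.mul_self_sqrt ha0.le).symm
    _ ≤ c * Real.sqrt a := by nlinarith
    _ ≤ ψ a := h2
  -- A is bounded above by max 1 c²
  have hbdd : BddAbove A := by
    refine ⟨max 1 (c ^ 2), fun s hs => ?_⟩
    obtain ⟨hs0, hsle⟩ := hs
    by_contra hcon
    push_neg at hcon
    have hs1 : (1 : ℝ) ≤ s := le_of_lt ((le_max_left _ _).trans_lt hcon)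
    have hsc : c ^ 2 < s := (le_max_right _ _).trans_lt hcon
    have h1 := hratio 1 s one_pos hs1
    rw [Real.sqrt_one, div_one] at h1
    have hss : 0 < Real.sqrt s := Real.sqrt_pos.mpr hs0
    have h2 : s / Real.sqrt s ≤ c := le_trans (by gcongr) h1
    rw [Real.div_sqrt] at h2
    have : s ≤ c ^ 2 := by
      calc s = Real.sqrt s * Real.sqrt s := (Real.mul_self_sqrt hs0.le).symm
      _ ≤ c * c := by nlinarith
      _ = c ^ 2 := by ring
    linarith
  set R := sSup A with hR
  have haR : a ≤ R := le_csSup hbdd haA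
  have hR0 : 0 < R := lt_of_lt_of_le ha0 haR
  have hfix : ψ R = R := by
    rcases lt_trichotomy (ψ R) R with hlt | heq | hgt
    · have hle : R ≤ ψ R := by
        apply csSup_le ⟨a, haA⟩
        intro s hs
        obtain ⟨hs0, hsle⟩ := hs
        by_contra hcon
        push_neg at hcon
        have hsR : s ≤ R := le_csSup hbdd ⟨hs0, hsle⟩
        have := hmono s R hs0.le hsR
        linarith
      linarith
    · exact heq
    · have hmem : ψ R ∈ A := ⟨hR0.trans hgt, hmono R (ψ R) hR0.le hgt.le⟩
      have := le_csSup hbdd hmem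
      linarith
  refine ⟨R, ⟨hR0, hfix⟩, ?_⟩
  rintro y ⟨hy0, hyfix⟩
  -- uniqueness
  have key : ∀ u v : ℝ, 0 < u → u ≤ v → ψ u = u → ψ v = v → v ≤ u := by
    intro u v hu huv hfu hfv
    have h1 := hratio u v hu huv
    rw [hfu, hfv, Real.div_sqrt, Real.div_sqrt] at h1
    have := Real.sqrt_le_sqrt huv
    have h2 : Real.sqrt u = Real.sqrt v := le_antisymm this h1
    have : u = v := by
      have := congrArg (fun x => x * x) h2
      simpa [Real.mul_self_sqrt hu.le,
        Real.mul_self_sqrt (hu.le.trans huv)] using this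
    linarith
  rcases le_total y R with hle | hle
  · exact le_antisymm hle (key y R hy0 hle hyfix hfix)
  · exact le_antisymm (key R y hR0 hle hfix hyfix) hle
end

section
/- Let $\psi$ be a nontrivial sub-root function with fixed point $r^*$. Then for every $r > 0$: $r \ge \psi(r)$ if and only if $r \ge r^*$. -/
/-- For a nontrivial sub-root function `ψ` with (unique positive) fixed point `r*`,
for every `r > 0` we have `ψ r ≤ r ↔ r* ≤ r`. -/
theorem subroot_fixed_point_characterization (ψ : ℝ → ℝ) (h : SubRoot ψ)
    (rstar : ℝ) (hpos : 0 < rstar) (hfix : ψ rstar = rstar)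
    (huniq : ∀ r, 0 < r → ψ r = r → r = rstar) :
    ∀ r : ℝ, 0 < r → (ψ r ≤ r ↔ rstar ≤ r) := by
  obtain ⟨hnn, hmono, hratio⟩ := h
  intro r hr
  have hsr : 0 < Real.sqrt r := Real.sqrt_pos.mpr hr
  have hss : 0 < Real.sqrt rstar := Real.sqrt_pos.mpr hpos
  have hfixr : ψ rstar / Real.sqrt rstar = Real.sqrt rstar := by
    rw [hfix, Real.div_sqrt]
  constructor
  · intro hle
    by_contra hlt
    push_neg at hlt
    have h1 : ψ rstar / Real.sqrt rstar ≤ ψ r / Real.sqrt r :=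
      hratio r rstar hr hlt.le
    rw [hfixr] at h1
    have h2 : Real.sqrt rstar * Real.sqrt r ≤ ψ r := by
      rw [← le_div_iff₀ hsr]; exact h1
    have h3 : Real.sqrt r < Real.sqrt rstar := Real.sqrt_lt_sqrt hr.le hlt
    have h4 : r < Real.sqrt rstar * Real.sqrt r := by
      nlinarith [Real.sq_sqrt hr.le, Real.sqrt_nonneg r]
    linarith
  · intro hge
    have h1 : ψ r / Real.sqrt r ≤ Real.sqrt rstar := by
      rw [← hfixr]; exact hratio rstar r hpos hge
    have h2 : ψ r ≤ Real.sqrt rstar * Real.sqrt r := by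
      rw [div_le_iff₀ hsr] at h1; linarith
    have h3 : Real.sqrt rstar ≤ Real.sqrt r := Real.sqrt_le_sqrt hge
    nlinarith [Real.sq_sqrt hr.le, Real.sqrt_nonneg r]
end
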